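/- Let G be the group of permutations of F₉ (the field with 9 elements) of the form x ↦ αx + β with β ∈ F₉ and α⁴ = 1, and let H = {x ↦ ±x}. Then the pair (G, H) does not have the Jordan property: there exist maximal chains of subgroups between H and G of different lengths (e.g. H < {x ↦ αx : α⁴=1} < G has length 2, while H < {x ↦ ±x+β : β ∈ F₃} < {x ↦ ±x+β : β ∈ F₉} < G has length 3), even though G contains an abelian subgroup (the translations {x ↦ x+β}) having exactly two orbits on G/H. -/

import Mathlib

open Pointwise


open Pointwise

namespace Stmt17

variable {F : Type*} [Field F]

/-- The affine permutation `x ↦ α x + β`. -/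
def aff (α β : F) (hα : α ≠ 0) : Equiv.Perm F :=
  (Equiv.mulLeft₀ α hα).trans (Equiv.addRight β)

@[simp] lemma aff_apply (α β : F) (hα : α ≠ 0) (x : F) : aff α β hα x = α * x + β := rfl

/-- translation by `c` -/
def tr (c : F) : Equiv.Perm F := aff 1 c one_ne_zero

@[simp] lemma tr_apply (c x : F) : tr c x = x + c := by simp [tr]

lemma perm_inv_apply (σ : Equiv.Perm F) (α β : F) (hα : α ≠ 0)
    (h : ∀ x, σ x = α * x + β) (x : F) : σ⁻¹ x = α⁻¹ * x - α⁻¹ * β := by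
  apply σ.injective
  rw [Equiv.Perm.inv_def, Equiv.apply_symm_apply, h]
  field_simp
  ring

lemma tr_mul (a b : F) : tr a * tr b = tr (a + b) := by
  ext x; simp [Equiv.Perm.mul_apply]; ring

lemma tr_inv (a : F) : (tr a)⁻¹ = tr (-a) := by
  ext x
  rw [perm_inv_apply (tr a) 1 a one_ne_zero (fun x => by simp)]
  simp [sub_eq_add_neg]

lemma tr_zero : (tr 0 : Equiv.Perm F) = 1 := by ext x; simp

lemma sq_roots {α : F} (h : α ^ 2 = 1) : α = 1 ∨ α = -1 := by
  have h' : (α - 1) * (α + 1) = 0 := by linear_combination h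
  rcases mul_eq_zero.mp h' with h'' | h''
  · exact Or.inl (by linear_combination h'')
  · exact Or.inr (by linear_combination h'')

lemma quartic_roots {i α : F} (hi : i ^ 2 = -1) (h : α ^ 4 = 1) :
    α = 1 ∨ α = -1 ∨ α = i ∨ α = -i := by
  have h' : (α ^ 2 - 1) * (α ^ 2 + 1) = 0 := by linear_combination h
  rcases mul_eq_zero.mp h' with h'' | h''
  · rcases sq_roots (by linear_combination h'') with h3 | h3
    · exact Or.inl h3
    · exact Or.inr (Or.inl h3)
  · have h4 : (α - i) * (α + i) = 0 := by linear_combination h'' - hi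
    rcases mul_eq_zero.mp h4 with h5 | h5
    · exact Or.inr (Or.inr (Or.inl (by linear_combination h5)))
    · exact Or.inr (Or.inr (Or.inr (by linear_combination h5)))

lemma ne_zero_of_pow4 {α : F} (h : α ^ 4 = 1) : α ≠ 0 := by
  rintro rfl; simp at h

lemma ne_zero_of_pow2 {α : F} (h : α ^ 2 = 1) : α ≠ 0 := by
  rintro rfl; simp at h

lemma inv_pow4 {α : F} (h : α ^ 4 = 1) : (α⁻¹) ^ 4 = 1 := by
  rw [inv_pow, h, inv_one]

lemma inv_pow2 {α : F} (h : α ^ 2 = 1) : (α⁻¹) ^ 2 = 1 := by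
  rw [inv_pow, h, inv_one]

section S

lemma S_mem_iff {a : F} : a ∈ ({0, 1, -1} : Set F) ↔ a = 0 ∨ a = 1 ∨ a = -1 := by
  simp [Set.mem_insert_iff]

lemma S_neg {a : F} (ha : a ∈ ({0, 1, -1} : Set F)) : -a ∈ ({0, 1, -1} : Set F) := by
  rcases S_mem_iff.mp ha with rfl | rfl | rfl <;> simp [S_mem_iff]

lemma S_add (h3 : (3 : F) = 0) {a b : F} (ha : a ∈ ({0, 1, -1} : Set F))
    (hb : b ∈ ({0, 1, -1} : Set F)) : a + b ∈ ({0, 1, -1} : Set F) := by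
  rcases S_mem_iff.mp ha with rfl | rfl | rfl <;>
    rcases S_mem_iff.mp hb with rfl | rfl | rfl <;>
      rw [S_mem_iff] <;>
        first
          | exact Or.inl (by ring1)
          | exact Or.inr (Or.inl (by ring1))
          | exact Or.inr (Or.inr (by ring1))
          | exact Or.inr (Or.inl (by linear_combination h3))
          | exact Or.inr (Or.inl (by linear_combination -h3))
          | exact Or.inr (Or.inr (by linear_combination h3))
          | exact Or.inr (Or.inr (by linear_combination -h3))

lemma S_mul {a b : F} (ha : a ∈ ({0, 1, -1} : Set F)) (hb : b ∈ ({0, 1, -1} : Set F)) :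
    a * b ∈ ({0, 1, -1} : Set F) := by
  rcases S_mem_iff.mp ha with rfl | rfl | rfl <;>
    rcases S_mem_iff.mp hb with rfl | rfl | rfl <;> simp [S_mem_iff]

lemma S_sub (h3 : (3 : F) = 0) {a b : F} (ha : a ∈ ({0, 1, -1} : Set F))
    (hb : b ∈ ({0, 1, -1} : Set F)) : a - b ∈ ({0, 1, -1} : Set F) := by
  rw [sub_eq_add_neg]; exact S_add h3 ha (S_neg hb)

end S

lemma one_ne_neg_one (h3 : (3 : F) = 0) : (1 : F) ≠ -1 := by
  intro h
  exact one_ne_zero (α := F) (by linear_combination h3 - h)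

lemma i_not_S (h3 : (3 : F) = 0) {i : F} (hi : i ^ 2 = -1) : i ∉ ({0, 1, -1} : Set F) := by
  rw [S_mem_iff]
  rintro (rfl | rfl | rfl)
  · exact one_ne_zero (α := F) (by linear_combination hi)
  · exact one_ne_zero (α := F) (by linear_combination h3 - hi)
  · exact one_ne_zero (α := F) (by linear_combination h3 - hi)

/-- The key "spanning" lemma: if `u ≠ 0` and `v` is not an `F₃`-multiple of `u`,
then every element of `F` (with `9` elements) is `s*u + t*v` with `s, t ∈ {0,1,-1}`. -/
lemma span9 [Fintype F] (hF : Fintype.card F = 9) (h3 : (3 : F) = 0) {u v : F}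
    (hu : u ≠ 0) (hv : ∀ s ∈ ({0, 1, -1} : Set F), v ≠ s * u) (c : F) :
    ∃ s t : F, s ∈ ({0, 1, -1} : Set F) ∧ t ∈ ({0, 1, -1} : Set F) ∧ c = s * u + t * v := by
  classical
  have h1m := one_ne_neg_one h3
  set A : Finset F := {0, 1, -1} with hA
  have hmemA : ∀ a : F, a ∈ A ↔ a ∈ ({0, 1, -1} : Set F) := by
    intro a; simp [hA, S_mem_iff]
  have hcardA : A.card = 3 := by
    have e1 : (0 : F) ∉ ({1, -1} : Finset F) := by
      simp only [Finset.mem_insert, Finset.mem_singleton]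
      push_neg
      exact ⟨zero_ne_one, fun h => one_ne_zero (α := F) (by linear_combination h)⟩
    have e2 : (1 : F) ∉ ({-1} : Finset F) := by
      simpa using h1m
    rw [hA, Finset.card_insert_of_notMem e1, Finset.card_insert_of_notMem e2,
      Finset.card_singleton]
  set f : F × F → F := fun p => p.1 * u + p.2 * v with hf
  have hinj : Set.InjOn f ↑(A ×ˢ A) := by
    rintro ⟨s, t⟩ hst ⟨s', t'⟩ hst' heq
    rw [Finset.mem_coe, Finset.mem_product] at hst hst'
    obtain ⟨hs, ht⟩ := hst
    obtain ⟨hs', ht'⟩ := hst'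
    rw [hmemA] at hs ht hs' ht'
    simp only [hf] at heq
    by_cases hT : t = t'
    · subst hT
      have : s = s' := by
        have := add_right_cancel heq
        exact mul_right_cancel₀ hu this
      simp [this]
    · exfalso
      have hd : t' - t = 1 ∨ t' - t = -1 := by
        have h1 : t' - t ∈ ({0, 1, -1} : Set F) := S_sub h3 ht' ht
        rcases S_mem_iff.mp h1 with h2 | h2 | h2
        · exact absurd (by linear_combination -h2) hT
        · exact Or.inl h2
        · exact Or.inr h2
      have hd0 : t' - t ≠ 0 := sub_ne_zero.mpr (Ne.symm hT)
      have hdinv : (t' - t)⁻¹ = t' - t := by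
        rcases hd with h2 | h2 <;> rw [h2] <;> norm_num
      have hvu : v = ((t' - t) * (s - s')) * u := by
        have h5 : (s - s') * u = (t' - t) * v := by linear_combination heq
        rcases hd with h2 | h2
        · linear_combination (-(t' - t)) * h5 - v * (1 + t' - t) * h2
        · linear_combination (-(t' - t)) * h5 + v * (1 - (t' - t)) * h2
      have hcoef : (t' - t) * (s - s') ∈ ({0, 1, -1} : Set F) :=
        S_mul (S_sub h3 ht' ht) (S_sub h3 hs hs')
      exact hv _ hcoef hvu
  have himg : (A ×ˢ A).image f = Finset.univ := by
    apply Finset.eq_univ_of_card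
    rw [Finset.card_image_of_injOn hinj, Finset.card_product, hcardA, hF]
  have hc : c ∈ (A ×ˢ A).image f := by rw [himg]; exact Finset.mem_univ c
  obtain ⟨⟨s, t⟩, hmem, heq⟩ := Finset.mem_image.mp hc
  rw [Finset.mem_product] at hmem
  exact ⟨s, t, (hmemA s).mp hmem.1, (hmemA t).mp hmem.2, heq.symm⟩

/-- Translations -/
def subT : Subgroup (Equiv.Perm F) where
  carrier := {σ | ∃ β, ∀ x, σ x = x + β}
  one_mem' := ⟨0, by simp⟩
  mul_mem' := by
    rintro σ τ ⟨β₁, h1⟩ ⟨β₂, h2⟩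
    exact ⟨β₂ + β₁, fun x => by rw [Equiv.Perm.mul_apply, h2, h1]; ring⟩
  inv_mem' := by
    rintro σ ⟨β, h⟩
    refine ⟨-β, fun x => ?_⟩
    rw [perm_inv_apply σ 1 β one_ne_zero (fun x => by rw [h]; ring)]
    ring

/-- `x ↦ αx`, `α⁴ = 1` -/
def subK : Subgroup (Equiv.Perm F) where
  carrier := {σ | ∃ α, α ^ 4 = 1 ∧ ∀ x, σ x = α * x}
  one_mem' := ⟨1, one_pow 4, fun x => (one_mul x).symm⟩
  mul_mem' := by
    rintro σ τ ⟨α, hα, h1⟩ ⟨α', hα', h2⟩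
    refine ⟨α * α', by rw [mul_pow, hα, hα', one_mul], fun x => ?_⟩
    rw [Equiv.Perm.mul_apply, h2, h1]; ring
  inv_mem' := by
    rintro σ ⟨α, hα, h⟩
    refine ⟨α⁻¹, inv_pow4 hα, fun x => ?_⟩
    rw [perm_inv_apply σ α 0 (ne_zero_of_pow4 hα) (fun x => by rw [h]; ring)]
    ring

/-- `x ↦ ±x + β` -/
def subQ : Subgroup (Equiv.Perm F) where
  carrier := {σ | ∃ α β, α ^ 2 = 1 ∧ ∀ x, σ x = α * x + β}
  one_mem' := ⟨1, 0, one_pow 2, fun x => by simp⟩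
  mul_mem' := by
    rintro σ τ ⟨α, β, hα, h1⟩ ⟨α', β', hα', h2⟩
    refine ⟨α * α', α * β' + β, by rw [mul_pow, hα, hα', one_mul], fun x => ?_⟩
    rw [Equiv.Perm.mul_apply, h2, h1]; ring
  inv_mem' := by
    rintro σ ⟨α, β, hα, h⟩
    refine ⟨α⁻¹, -(α⁻¹ * β), inv_pow2 hα, fun x => ?_⟩
    rw [perm_inv_apply σ α β (ne_zero_of_pow2 hα) h]
    ring

/-- `x ↦ ±x + β`, `β ∈ F₃` -/
def subP (h3 : (3 : F) = 0) : Subgroup (Equiv.Perm F) where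
  carrier := {σ | ∃ α β, α ^ 2 = 1 ∧ β ∈ ({0, 1, -1} : Set F) ∧ ∀ x, σ x = α * x + β}
  one_mem' := ⟨1, 0, one_pow 2, Or.inl rfl, fun x => by simp⟩
  mul_mem' := by
    rintro σ τ ⟨α, β, hα, hβ, h1⟩ ⟨α', β', hα', hβ', h2⟩
    have hαS : α ∈ ({0, 1, -1} : Set F) := by
      rcases sq_roots hα with rfl | rfl <;> rw [S_mem_iff] <;> tauto
    refine ⟨α * α', α * β' + β, by rw [mul_pow, hα, hα', one_mul],
      S_add h3 (S_mul hαS hβ') hβ, fun x => ?_⟩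
    rw [Equiv.Perm.mul_apply, h2, h1]; ring
  inv_mem' := by
    rintro σ ⟨α, β, hα, hβ, h⟩
    have hαS : α⁻¹ ∈ ({0, 1, -1} : Set F) := by
      rcases sq_roots hα with rfl | rfl <;> rw [S_mem_iff] <;> norm_num
    refine ⟨α⁻¹, -(α⁻¹ * β), inv_pow2 hα, S_neg (S_mul hαS hβ), fun x => ?_⟩
    rw [perm_inv_apply σ α β (ne_zero_of_pow2 hα) h]
    ring

/-- If `C` contains the translations by `u` and `v`, which are `F₃`-independent,
then `C` contains all translations. -/
lemma trans_span [Fintype F] (hF : Fintype.card F = 9) (h3 : (3 : F) = 0)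
    {C : Subgroup (Equiv.Perm F)} {u v : F} (hu : u ≠ 0)
    (hv : ∀ s ∈ ({0, 1, -1} : Set F), v ≠ s * u)
    (hCu : tr u ∈ C) (hCv : tr v ∈ C) (c : F) : tr c ∈ C := by
  have key : ∀ w : F, tr w ∈ C → ∀ s ∈ ({0, 1, -1} : Set F), tr (s * w) ∈ C := by
    intro w hw s hs
    rcases S_mem_iff.mp hs with rfl | rfl | rfl
    · rw [zero_mul, tr_zero]; exact one_mem C
    · rw [one_mul]; exact hw
    · have : tr (-1 * w) = (tr w)⁻¹ := by rw [tr_inv]; ring_nf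
      rw [this]; exact inv_mem hw
  obtain ⟨s, t, hs, ht, rfl⟩ := span9 hF h3 hu hv c
  have : tr (s * u + t * v) = tr (s * u) * tr (t * v) := by rw [tr_mul]
  rw [this]
  exact mul_mem (key u hCu s hs) (key v hCv t ht)

lemma aff_congr {α β α' β' : F} (h : α ≠ 0) (h' : α' ≠ 0) (e1 : α = α') (e2 : β = β') :
    aff α β h = aff α' β' h' := by subst e1; subst e2; rfl

lemma covby_of {X : Type*} [Group X] (A B : Subgroup X) (hAB : A < B)
    (h : ∀ C : Subgroup X, A ≤ C → C ≤ B → (∃ σ ∈ C, σ ∉ A) → B ≤ C) : A ⋖ B :=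
  ⟨hAB, fun C hAC hCB => hCB.2 (h C hAC.1 hCB.1 (SetLike.exists_of_lt hAC))⟩

section Covers

lemma i_ne_zero {i : F} (hi : i ^ 2 = -1) : i ≠ 0 := by
  rintro rfl
  exact one_ne_zero (α := F) (by linear_combination hi)

lemma i_pow4 {i : F} (hi : i ^ 2 = -1) : i ^ 4 = 1 := by
  have h : i ^ 4 = (i ^ 2) ^ 2 := by ring
  rw [h, hi, neg_one_sq]

lemma sq_ne_of_i {i : F} (hi : i ^ 2 = -1) (h3 : (3 : F) = 0) (hα2 : i ^ 2 = 1) : False :=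
  one_ne_zero (α := F) (by linear_combination hα2 - hi + h3)

lemma cover_HK (h3 : (3 : F) = 0) {i : F} (hi : i ^ 2 = -1) (H : Subgroup (Equiv.Perm F))
    (hHm : ∀ σ : Equiv.Perm F, σ ∈ H ↔ ∃ α : F, α ^ 2 = 1 ∧ ∀ x, σ x = α * x) :
    H ⋖ (subK : Subgroup (Equiv.Perm F)) := by
  have hi0 : i ≠ 0 := i_ne_zero hi
  have hi4 : i ^ 4 = 1 := i_pow4 hi
  have hle : H ≤ subK := by
    intro σ hσ
    obtain ⟨α, hα2, h⟩ := (hHm σ).mp hσ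
    exact ⟨α, by rw [show α ^ 4 = (α ^ 2) ^ 2 by ring, hα2, one_pow], h⟩
  have hiK : aff i 0 hi0 ∈ (subK : Subgroup (Equiv.Perm F)) :=
    ⟨i, hi4, fun x => by rw [aff_apply, add_zero]⟩
  have hiH : aff i 0 hi0 ∉ H := by
    intro hmem
    obtain ⟨α, hα2, h⟩ := (hHm _).mp hmem
    have h1 : α = i := by have := h 1; rw [aff_apply] at this; linear_combination -this
    subst h1
    exact sq_ne_of_i hi h3 hα2
  apply covby_of _ _ (SetLike.lt_iff_le_and_exists.mpr ⟨hle, aff i 0 hi0, hiK, hiH⟩)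
  rintro C hHC hCK ⟨σ, hσC, hσH⟩
  obtain ⟨α, hα4, hσ⟩ := hCK hσC
  have hnegC : aff (-1) 0 (neg_ne_zero.mpr one_ne_zero) ∈ C :=
    hHC ((hHm _).mpr ⟨-1, neg_one_sq, fun x => by rw [aff_apply, add_zero]⟩)
  have hα : α = i ∨ α = -i := by
    rcases quartic_roots hi hα4 with rfl | rfl | h | h
    · exact absurd ((hHm σ).mpr ⟨1, one_pow 2, hσ⟩) hσH
    · exact absurd ((hHm σ).mpr ⟨-1, neg_one_sq, hσ⟩) hσH
    · exact Or.inl h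
    · exact Or.inr h
  intro τ hτ
  obtain ⟨γ, hγ4, hτf⟩ := hτ
  have hcase : ∀ ρ : Equiv.Perm F, ρ ∈ C → (∀ x, ρ x = γ * x) → τ ∈ C := by
    intro ρ hρ hρf
    have : τ = ρ := Equiv.ext fun x => by rw [hτf, hρf]
    exact this ▸ hρ
  rcases quartic_roots hi hγ4 with rfl | rfl | rfl | rfl
  · exact hHC ((hHm τ).mpr ⟨1, one_pow 2, hτf⟩)
  · exact hHC ((hHm τ).mpr ⟨-1, neg_one_sq, hτf⟩)
  · rcases hα with rfl | rfl
    · exact hcase σ hσC hσ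
    · exact hcase _ (mul_mem hnegC hσC)
        (fun x => by rw [Equiv.Perm.mul_apply, hσ x, aff_apply]; ring)
  · rcases hα with rfl | rfl
    · exact hcase _ (mul_mem hnegC hσC)
        (fun x => by rw [Equiv.Perm.mul_apply, hσ x, aff_apply]; ring)
    · exact hcase σ hσC hσ

lemma cover_KG [Fintype F] (hF : Fintype.card F = 9) (h3 : (3 : F) = 0) {i : F} (hi : i ^ 2 = -1) (G : Subgroup (Equiv.Perm F))
    (hGm : ∀ σ : Equiv.Perm F, σ ∈ G ↔ ∃ α β : F, α ^ 4 = 1 ∧ ∀ x, σ x = α * x + β) :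
    (subK : Subgroup (Equiv.Perm F)) ⋖ G := by
  have hi4 : i ^ 4 = 1 := i_pow4 hi
  have hle : (subK : Subgroup (Equiv.Perm F)) ≤ G := by
    rintro σ ⟨α, hα4, h⟩
    exact (hGm σ).mpr ⟨α, 0, hα4, fun x => by rw [h x, add_zero]⟩
  have htr1G : tr (1 : F) ∈ G :=
    (hGm _).mpr ⟨1, 1, one_pow 4, fun x => by rw [tr_apply, one_mul]⟩
  have htr1K : tr (1 : F) ∉ (subK : Subgroup (Equiv.Perm F)) := by
    rintro ⟨α, hα4, h⟩
    have := h 0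
    rw [tr_apply, mul_zero, zero_add] at this
    exact one_ne_zero this
  apply covby_of _ _ (SetLike.lt_iff_le_and_exists.mpr ⟨hle, tr 1, htr1G, htr1K⟩)
  rintro C hKC hCG ⟨σ, hσC, hσK⟩
  obtain ⟨α, β, hα4, hσ⟩ := (hGm σ).mp (hCG hσC)
  have hα0 : α ≠ 0 := ne_zero_of_pow4 hα4
  have hβ0 : β ≠ 0 := by
    rintro rfl
    exact hσK ⟨α, hα4, fun x => by rw [hσ x, add_zero]⟩
  have hscal : ∀ γ : F, ∀ hγ : γ ^ 4 = 1, aff γ 0 (ne_zero_of_pow4 hγ) ∈ C :=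
    fun γ hγ => hKC ⟨γ, hγ, fun x => by rw [aff_apply, add_zero]⟩
  set b := α⁻¹ * β with hb
  have hb0 : b ≠ 0 := mul_ne_zero (inv_ne_zero hα0) hβ0
  have htrb : tr b ∈ C := by
    have heq : tr b = aff α⁻¹ 0 (inv_ne_zero hα0) * σ := Equiv.ext fun x => by
      rw [tr_apply, Equiv.Perm.mul_apply, hσ x, aff_apply, hb]
      field_simp
      ring
    rw [heq]
    exact mul_mem (hscal α⁻¹ (inv_pow4 hα4)) hσC
  have hconj : ∀ γ : F, γ ^ 4 = 1 → tr (γ * b) ∈ C := by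
    intro γ hγ4
    have hγ0 : γ ≠ 0 := ne_zero_of_pow4 hγ4
    have heq : tr (γ * b)
        = aff γ 0 hγ0 * tr b * aff γ⁻¹ 0 (inv_ne_zero hγ0) := Equiv.ext fun x => by
      rw [Equiv.Perm.mul_apply, Equiv.Perm.mul_apply, aff_apply, tr_apply, aff_apply,
        tr_apply]
      field_simp
      ring
    rw [heq]
    exact mul_mem (mul_mem (hscal γ hγ4) htrb) (hscal γ⁻¹ (inv_pow4 hγ4))
  have htrib : tr (i * b) ∈ C := hconj i hi4
  have hv : ∀ s ∈ ({0, 1, -1} : Set F), i * b ≠ s * b := by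
    intro s hs h
    have : i = s := mul_right_cancel₀ hb0 h
    exact i_not_S h3 hi (this ▸ hs)
  have htr_all : ∀ c : F, tr c ∈ C := trans_span hF h3 hb0 hv htrb htrib
  intro τ hτ
  obtain ⟨γ, δ, hγ4, hτf⟩ := (hGm τ).mp hτ
  have heq : τ = tr δ * aff γ 0 (ne_zero_of_pow4 hγ4) := Equiv.ext fun x => by
    rw [hτf, Equiv.Perm.mul_apply, aff_apply, tr_apply]
    ring
  rw [heq]
  exact mul_mem (htr_all δ) (hscal γ hγ4)

lemma cover_HP (h3 : (3 : F) = 0) (H : Subgroup (Equiv.Perm F))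
    (hHm : ∀ σ : Equiv.Perm F, σ ∈ H ↔ ∃ α : F, α ^ 2 = 1 ∧ ∀ x, σ x = α * x) :
    H ⋖ (subP h3 : Subgroup (Equiv.Perm F)) := by
  have hle : H ≤ subP h3 := by
    intro σ hσ
    obtain ⟨α, hα2, h⟩ := (hHm σ).mp hσ
    exact ⟨α, 0, hα2, Or.inl rfl, fun x => by rw [h x, add_zero]⟩
  have h1S : (1 : F) ∈ ({0, 1, -1} : Set F) := Or.inr (Or.inl rfl)
  have htr1P : tr (1 : F) ∈ subP h3 :=
    ⟨1, 1, one_pow 2, h1S, fun x => by rw [tr_apply, one_mul]⟩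
  have htr1H : tr (1 : F) ∉ H := by
    intro hmem
    obtain ⟨α, hα2, h⟩ := (hHm _).mp hmem
    have := h 0
    rw [tr_apply, mul_zero, zero_add] at this
    exact one_ne_zero this
  apply covby_of _ _ (SetLike.lt_iff_le_and_exists.mpr ⟨hle, tr 1, htr1P, htr1H⟩)
  rintro C hHC hCP ⟨σ, hσC, hσH⟩
  obtain ⟨α, β, hα2, hβS, hσ⟩ := hCP hσC
  have hα0 : α ≠ 0 := ne_zero_of_pow2 hα2
  have hβ0 : β ≠ 0 := by
    rintro rfl
    exact hσH ((hHm σ).mpr ⟨α, hα2, fun x => by rw [hσ x, add_zero]⟩)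
  have hscalH : ∀ γ : F, ∀ hγ : γ ^ 2 = 1, aff γ 0 (ne_zero_of_pow2 hγ) ∈ H :=
    fun γ hγ => (hHm _).mpr ⟨γ, hγ, fun x => by rw [aff_apply, add_zero]⟩
  set e := α⁻¹ * β with he
  have hαinvS : α⁻¹ ∈ ({0, 1, -1} : Set F) := by
    rcases sq_roots hα2 with rfl | rfl <;> rw [S_mem_iff] <;> norm_num
  have heS : e ∈ ({0, 1, -1} : Set F) := S_mul hαinvS hβS
  have he0 : e ≠ 0 := mul_ne_zero (inv_ne_zero hα0) hβ0
  have htre : tr e ∈ C := by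
    have heq : tr e = aff α⁻¹ 0 (inv_ne_zero hα0) * σ := Equiv.ext fun x => by
      rw [tr_apply, Equiv.Perm.mul_apply, hσ x, aff_apply, he]
      field_simp
      ring
    rw [heq]
    exact mul_mem (hHC (hscalH α⁻¹ (inv_pow2 hα2))) hσC
  have htr1 : tr (1 : F) ∈ C := by
    rcases S_mem_iff.mp heS with h | h | h
    · exact absurd h he0
    · exact h ▸ htre
    · rw [h] at htre
      have : tr (1 : F) = (tr (-1 : F))⁻¹ := by rw [tr_inv, neg_neg]
      rw [this]
      exact inv_mem htre
  have htrS : ∀ δ ∈ ({0, 1, -1} : Set F), tr δ ∈ C := by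
    intro δ hδ
    rcases S_mem_iff.mp hδ with rfl | rfl | rfl
    · rw [tr_zero]; exact one_mem C
    · exact htr1
    · have := inv_mem htr1
      rwa [tr_inv] at this
  intro τ hτ
  obtain ⟨γ, δ, hγ2, hδS, hτf⟩ := hτ
  have heq : τ = tr δ * aff γ 0 (ne_zero_of_pow2 hγ2) := Equiv.ext fun x => by
    rw [hτf, Equiv.Perm.mul_apply, aff_apply, tr_apply]
    ring
  rw [heq]
  exact mul_mem (htrS δ hδS) (hHC (hscalH γ hγ2))

lemma cover_PQ [Fintype F] (hF : Fintype.card F = 9) (h3 : (3 : F) = 0) :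
    (subP h3 : Subgroup (Equiv.Perm F)) ⋖ (subQ : Subgroup (Equiv.Perm F)) := by
  classical
  have h1S : (1 : F) ∈ ({0, 1, -1} : Set F) := Or.inr (Or.inl rfl)
  have hle : (subP h3 : Subgroup (Equiv.Perm F)) ≤ subQ := by
    rintro σ ⟨α, β, hα2, _, h⟩
    exact ⟨α, β, hα2, h⟩
  obtain ⟨β₀, hβ₀⟩ : ∃ β₀ : F, β₀ ∉ ({0, 1, -1} : Set F) := by
    by_contra hcon
    push_neg at hcon
    have hsub : (Finset.univ : Finset F) ⊆ ({0, 1, -1} : Finset F) := by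
      intro x _
      have := hcon x
      rw [S_mem_iff] at this
      simp only [Finset.mem_insert, Finset.mem_singleton]
      exact this
    have h9 : (9 : ℕ) ≤ ({0, 1, -1} : Finset F).card := by
      rw [← hF, ← Finset.card_univ]
      exact Finset.card_le_card hsub
    have hle3 : ({0, 1, -1} : Finset F).card ≤ 3 :=
      le_trans (Finset.card_insert_le _ _)
        (by
          have := Finset.card_insert_le (1 : F) ({-1} : Finset F)
          simp only [Finset.card_singleton] at this
          omega)
    omega
  have htrQ : ∀ δ : F, tr δ ∈ (subQ : Subgroup (Equiv.Perm F)) :=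
    fun δ => ⟨1, δ, one_pow 2, fun x => by rw [tr_apply, one_mul]⟩
  have htrP : tr β₀ ∉ subP h3 := by
    rintro ⟨γ, δ, hγ2, hδS, h⟩
    have := h 0
    rw [tr_apply, mul_zero, zero_add, zero_add] at this
    exact hβ₀ (this ▸ hδS)
  apply covby_of _ _ (SetLike.lt_iff_le_and_exists.mpr ⟨hle, tr β₀, htrQ β₀, htrP⟩)
  rintro C hPC hCQ ⟨σ, hσC, hσP⟩
  obtain ⟨α, β, hα2, hσ⟩ := hCQ hσC
  have hα0 : α ≠ 0 := ne_zero_of_pow2 hα2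
  have hβS : β ∉ ({0, 1, -1} : Set F) := fun h => hσP ⟨α, β, hα2, h, hσ⟩
  have hscalP : ∀ γ : F, ∀ hγ : γ ^ 2 = 1, aff γ 0 (ne_zero_of_pow2 hγ) ∈ subP h3 :=
    fun γ hγ => ⟨γ, 0, hγ, Or.inl rfl, fun x => by rw [aff_apply, add_zero]⟩
  have hαS : α ∈ ({0, 1, -1} : Set F) := by
    rcases sq_roots hα2 with rfl | rfl <;> rw [S_mem_iff] <;> tauto
  set b := α⁻¹ * β with hb
  have hbS : b ∉ ({0, 1, -1} : Set F) := by
    intro hmem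
    apply hβS
    have : β = α * b := by rw [hb]; field_simp
    rw [this]
    exact S_mul hαS hmem
  have htrb : tr b ∈ C := by
    have heq : tr b = aff α⁻¹ 0 (inv_ne_zero hα0) * σ := Equiv.ext fun x => by
      rw [tr_apply, Equiv.Perm.mul_apply, hσ x, aff_apply, hb]
      field_simp
      ring
    rw [heq]
    exact mul_mem (hPC (hscalP α⁻¹ (inv_pow2 hα2))) hσC
  have htr1 : tr (1 : F) ∈ C :=
    hPC ⟨1, 1, one_pow 2, h1S, fun x => by rw [tr_apply, one_mul]⟩
  have hv : ∀ s ∈ ({0, 1, -1} : Set F), b ≠ s * 1 := by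
    intro s hs h
    rw [mul_one] at h
    exact hbS (h ▸ hs)
  have htr_all : ∀ c : F, tr c ∈ C := trans_span hF h3 one_ne_zero hv htr1 htrb
  intro τ hτ
  obtain ⟨γ, δ, hγ2, hτf⟩ := hτ
  have heq : τ = tr δ * aff γ 0 (ne_zero_of_pow2 hγ2) := Equiv.ext fun x => by
    rw [hτf, Equiv.Perm.mul_apply, aff_apply, tr_apply]
    ring
  rw [heq]
  exact mul_mem (htr_all δ) (hPC (hscalP γ hγ2))

lemma cover_QG (h3 : (3 : F) = 0) {i : F} (hi : i ^ 2 = -1) (G : Subgroup (Equiv.Perm F))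
    (hGm : ∀ σ : Equiv.Perm F, σ ∈ G ↔ ∃ α β : F, α ^ 4 = 1 ∧ ∀ x, σ x = α * x + β) :
    (subQ : Subgroup (Equiv.Perm F)) ⋖ G := by
  have hi0 : i ≠ 0 := i_ne_zero hi
  have hi4 : i ^ 4 = 1 := i_pow4 hi
  have hle : (subQ : Subgroup (Equiv.Perm F)) ≤ G := by
    rintro σ ⟨α, β, hα2, h⟩
    exact (hGm σ).mpr ⟨α, β, by rw [show α ^ 4 = (α ^ 2) ^ 2 by ring, hα2, one_pow], h⟩
  have hiG : aff i 0 hi0 ∈ G :=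
    (hGm _).mpr ⟨i, 0, hi4, fun x => by rw [aff_apply]⟩
  have hiQ : aff i 0 hi0 ∉ (subQ : Subgroup (Equiv.Perm F)) := by
    rintro ⟨γ, δ, hγ2, h⟩
    have h0 := h 0
    rw [aff_apply, mul_zero, zero_add, mul_zero, zero_add] at h0
    have h1 := h 1
    rw [aff_apply, mul_one, add_zero, mul_one, ← h0, add_zero] at h1
    subst h1
    exact sq_ne_of_i hi h3 hγ2
  apply covby_of _ _ (SetLike.lt_iff_le_and_exists.mpr ⟨hle, aff i 0 hi0, hiG, hiQ⟩)
  rintro C hQC hCG ⟨σ, hσC, hσQ⟩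
  obtain ⟨α, β, hα4, hσ⟩ := (hGm σ).mp (hCG hσC)
  have hα0 : α ≠ 0 := ne_zero_of_pow4 hα4
  have htrQ : ∀ δ : F, tr δ ∈ (subQ : Subgroup (Equiv.Perm F)) :=
    fun δ => ⟨1, δ, one_pow 2, fun x => by rw [tr_apply, one_mul]⟩
  have hα : α = i ∨ α = -i := by
    rcases quartic_roots hi hα4 with rfl | rfl | h | h
    · exact absurd ⟨1, β, one_pow 2, hσ⟩ hσQ
    · exact absurd ⟨-1, β, neg_one_sq, hσ⟩ hσQ
    · exact Or.inl h
    · exact Or.inr h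
  have haffα : aff α 0 hα0 ∈ C := by
    have heq : aff α 0 hα0 = tr (-β) * σ := Equiv.ext fun x => by
      rw [aff_apply, Equiv.Perm.mul_apply, hσ x, tr_apply]
      ring
    rw [heq]
    exact mul_mem (hQC (htrQ (-β))) hσC
  have haffnα : aff (-α) 0 (neg_ne_zero.mpr hα0) ∈ C := by
    have heq : aff (-α) 0 (neg_ne_zero.mpr hα0)
        = aff (-1) 0 (neg_ne_zero.mpr one_ne_zero) * aff α 0 hα0 := Equiv.ext fun x => by
      rw [aff_apply, Equiv.Perm.mul_apply, aff_apply, aff_apply]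
      ring
    rw [heq]
    exact mul_mem (hQC ⟨-1, 0, neg_one_sq, fun x => by rw [aff_apply]⟩) haffα
  intro τ hτ
  obtain ⟨γ, δ, hγ4, hτf⟩ := (hGm τ).mp hτ
  have hγ0 : γ ≠ 0 := ne_zero_of_pow4 hγ4
  have heq : τ = tr δ * aff γ 0 hγ0 := Equiv.ext fun x => by
    rw [hτf, Equiv.Perm.mul_apply, aff_apply, tr_apply]
    ring
  rw [heq]
  refine mul_mem (hQC (htrQ δ)) ?_
  rcases quartic_roots hi hγ4 with rfl | rfl | rfl | rfl
  · exact hQC ⟨1, 0, one_pow 2, fun x => by rw [aff_apply]⟩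
  · exact hQC ⟨-1, 0, neg_one_sq, fun x => by rw [aff_apply]⟩
  · rcases hα with rfl | rfl
    · exact haffα
    · rw [aff_congr hγ0 (neg_ne_zero.mpr hα0) (neg_neg _).symm rfl]
      exact haffnα
  · rcases hα with rfl | rfl
    · rw [aff_congr (neg_ne_zero.mpr hi0) (neg_ne_zero.mpr hα0) rfl rfl]
      exact haffnα
    · exact haffα

end Covers

end Stmt17

open Stmt17 in
/-- Counterexample: `F` a field with 9 elements, `G = {x ↦ αx + β : α⁴ = 1}`,
`H = {x ↦ ±x}`.  Then there exist maximal chains between `H` and `G` of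
lengths `3` and `4` (so `(G,H)` fails the Jordan property), even though the
abelian subgroup `T = {x ↦ x + β}` of `G` has exactly two orbits on `G/H`. -/
theorem stmt17 {F : Type*} [Field F] [Fintype F] (hF : Fintype.card F = 9)
    (G H : Subgroup (Equiv.Perm F))
    (hG : (G : Set (Equiv.Perm F))
      = {σ | ∃ α β : F, α ^ 4 = 1 ∧ ∀ x, σ x = α * x + β})
    (hH : (H : Set (Equiv.Perm F)) = {σ | ∃ α : F, α ^ 2 = 1 ∧ ∀ x, σ x = α * x}) :
    (∃ c d : List (Subgroup (Equiv.Perm F)),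
      (c.Chain' (· ⋖ ·) ∧ c.head? = some H ∧ c.getLast? = some G) ∧
      (d.Chain' (· ⋖ ·) ∧ d.head? = some H ∧ d.getLast? = some G) ∧
      c.length = 3 ∧ d.length = 4) ∧
    ∃ T : Subgroup (Equiv.Perm F), T ≤ G ∧
      (T : Set (Equiv.Perm F)) = {σ | ∃ β : F, ∀ x, σ x = x + β} ∧
      (∀ σ₁ σ₂, σ₁ ∈ T → σ₂ ∈ T → σ₁ * σ₂ = σ₂ * σ₁) ∧
      ∃ σ₁ σ₂, σ₁ ∈ G ∧ σ₂ ∈ G ∧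
        σ₂ ∉ (T : Set (Equiv.Perm F)) * {σ₁} * (H : Set (Equiv.Perm F)) ∧
        (T : Set (Equiv.Perm F)) * {σ₁} * (H : Set (Equiv.Perm F)) ∪
          (T : Set (Equiv.Perm F)) * {σ₂} * (H : Set (Equiv.Perm F))
          = (G : Set (Equiv.Perm F)) := by
  have h3 : (3 : F) = 0 := by
    have h9 : (9 : F) = 0 := by
      have := Nat.cast_card_eq_zero F
      rw [hF] at this; exact_mod_cast this
    have hsq : ((3 : F)) ^ 2 = 0 := by linear_combination h9
    exact pow_eq_zero_iff (by norm_num) |>.mp hsq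
  obtain ⟨i, hi⟩ : ∃ i : F, i ^ 2 = -1 := by
    have : IsSquare (-1 : F) := by
      rw [FiniteField.isSquare_neg_one_iff, hF]; norm_num
    obtain ⟨r, hr⟩ := this
    exact ⟨r, by rw [sq]; exact hr.symm⟩
  have hi0 : i ≠ 0 := i_ne_zero hi
  have hi4 : i ^ 4 = 1 := i_pow4 hi
  have hGm : ∀ σ : Equiv.Perm F, σ ∈ G ↔ ∃ α β : F, α ^ 4 = 1 ∧ ∀ x, σ x = α * x + β :=
    fun σ => by rw [← SetLike.mem_coe, hG]; exact Iff.rfl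
  have hHm : ∀ σ : Equiv.Perm F, σ ∈ H ↔ ∃ α : F, α ^ 2 = 1 ∧ ∀ x, σ x = α * x :=
    fun σ => by rw [← SetLike.mem_coe, hH]; exact Iff.rfl
  constructor
  · refine ⟨[H, subK, G], [H, subP h3, subQ, G], ⟨?_, rfl, rfl⟩, ⟨?_, rfl, rfl⟩, rfl, rfl⟩
    · exact List.isChain_cons_cons.mpr ⟨cover_HK h3 hi H hHm,
        List.isChain_cons_cons.mpr ⟨cover_KG hF h3 hi G hGm, List.isChain_singleton _⟩⟩
    · exact List.isChain_cons_cons.mpr ⟨cover_HP h3 H hHm,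
        List.isChain_cons_cons.mpr ⟨cover_PQ hF h3,
          List.isChain_cons_cons.mpr ⟨cover_QG h3 hi G hGm, List.isChain_singleton _⟩⟩⟩
  · refine ⟨subT, ?_, rfl, ?_, 1, aff i 0 hi0, ?_, ?_, ?_, ?_⟩
    · rintro σ ⟨β, h⟩
      exact (hGm σ).mpr ⟨1, β, one_pow 4, fun x => by rw [h x, one_mul]⟩
    · rintro σ₁ σ₂ ⟨β₁, hb1⟩ ⟨β₂, hb2⟩
      refine Equiv.ext fun x => ?_
      rw [Equiv.Perm.mul_apply, Equiv.Perm.mul_apply, hb2, hb1, hb1, hb2]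
      ring
    · exact (hGm 1).mpr ⟨1, 0, one_pow 4, fun x => by simp⟩
    · exact (hGm _).mpr ⟨i, 0, hi4, fun x => rfl⟩
    · intro hmem
      obtain ⟨y, hy, z, hz, hyz⟩ := Set.mem_mul.mp hmem
      obtain ⟨t, ht, o, ho, hto⟩ := Set.mem_mul.mp hy
      rw [Set.mem_singleton_iff] at ho
      subst ho
      obtain ⟨β, htf⟩ := ht
      rw [hH] at hz
      obtain ⟨α, hα2, hzf⟩ := hz
      have happ : ∀ x : F, i * x + 0 = α * x + β := by
        intro x
        have h1 : (y * z) x = aff i 0 hi0 x := by rw [hyz]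
        rw [Equiv.Perm.mul_apply, ← hto, mul_one, hzf, htf, aff_apply] at h1
        exact h1.symm
      have h0 := happ 0
      have h1 := happ 1
      have hβ : β = 0 := by linear_combination -h0
      have hαi : α = i := by linear_combination -h1 - hβ
      subst hαi
      exact sq_ne_of_i hi h3 hα2
    · ext σ
      simp only [Set.mem_union, SetLike.mem_coe]
      constructor
      · rintro (hm | hm) <;>
        · obtain ⟨y, hy, z, hz, hyz⟩ := Set.mem_mul.mp hm
          obtain ⟨t, ht, o, ho, hto⟩ := Set.mem_mul.mp hy
          rw [Set.mem_singleton_iff] at ho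
          subst ho
          obtain ⟨β, htf⟩ := ht
          rw [hH] at hz
          obtain ⟨α, hα2, hzf⟩ := hz
          first
          | exact (hGm σ).mpr ⟨α, β,
              by rw [show α ^ 4 = (α ^ 2) ^ 2 by ring, hα2, one_pow],
              fun x => by
                rw [← hyz, Equiv.Perm.mul_apply, ← hto, Equiv.Perm.mul_apply,
                  Equiv.Perm.one_apply, hzf, htf]⟩
          | exact (hGm σ).mpr ⟨i * α, β,
              by rw [mul_pow, hi4, one_mul, show α ^ 4 = (α ^ 2) ^ 2 by ring, hα2, one_pow],
              fun x => by
                rw [← hyz, Equiv.Perm.mul_apply, ← hto, Equiv.Perm.mul_apply,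
                  hzf, htf, aff_apply]
                ring⟩
      · intro hσ
        obtain ⟨α, β, hα4, hσf⟩ := (hGm σ).mp hσ
        have hscalmem : ∀ γ : F, ∀ h2 : γ ^ 2 = 1,
            aff γ 0 (ne_zero_of_pow2 h2) ∈ (H : Set (Equiv.Perm F)) := fun γ h2 => by
          rw [hH]
          exact ⟨γ, h2, fun x => by rw [aff_apply, add_zero]⟩
        have htrT : ∀ δ : F, tr δ ∈ ((subT : Subgroup (Equiv.Perm F)) : Set (Equiv.Perm F)) :=
          fun δ => ⟨δ, fun x => tr_apply δ x⟩
        rcases quartic_roots hi hα4 with rfl | rfl | hαi | hαi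
        · refine Or.inl (Set.mem_mul.mpr ⟨tr β * 1, Set.mem_mul.mpr
            ⟨tr β, htrT β, 1, rfl, rfl⟩, aff 1 0 (ne_zero_of_pow2 (one_pow 2)),
            hscalmem 1 (one_pow 2), Equiv.ext fun x => ?_⟩)
          rw [Equiv.Perm.mul_apply, Equiv.Perm.mul_apply, Equiv.Perm.one_apply,
            aff_apply, tr_apply, hσf]
          ring
        · refine Or.inl (Set.mem_mul.mpr ⟨tr β * 1, Set.mem_mul.mpr
            ⟨tr β, htrT β, 1, rfl, rfl⟩, aff (-1) 0 (ne_zero_of_pow2 neg_one_sq),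
            hscalmem (-1) neg_one_sq, Equiv.ext fun x => ?_⟩)
          rw [Equiv.Perm.mul_apply, Equiv.Perm.mul_apply, Equiv.Perm.one_apply,
            aff_apply, tr_apply, hσf]
          ring
        · refine Or.inr (Set.mem_mul.mpr ⟨tr β * aff i 0 hi0, Set.mem_mul.mpr
            ⟨tr β, htrT β, aff i 0 hi0, rfl, rfl⟩, aff 1 0 (ne_zero_of_pow2 (one_pow 2)),
            hscalmem 1 (one_pow 2), Equiv.ext fun x => ?_⟩)
          rw [Equiv.Perm.mul_apply, Equiv.Perm.mul_apply, aff_apply, aff_apply,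
            tr_apply, hσf, hαi]
          ring
        · refine Or.inr (Set.mem_mul.mpr ⟨tr β * aff i 0 hi0, Set.mem_mul.mpr
            ⟨tr β, htrT β, aff i 0 hi0, rfl, rfl⟩, aff (-1) 0 (ne_zero_of_pow2 neg_one_sq),
            hscalmem (-1) neg_one_sq, Equiv.ext fun x => ?_⟩)
          rw [Equiv.Perm.mul_apply, Equiv.Perm.mul_apply, aff_apply, aff_apply,
            tr_apply, hσf, hαi]
          ring
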